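/- Let B skew-symmetric with B² = −I on ℝ^m, and v(x,t) = ct − (|x_h|^4 + 4x_v²)^{1/2} + r. Then at points with x_h ≠ 0, v_t − tr[X²v − (X²v Xv ⊗ Xv)/|Xv|²] = c + 2n|x_h|²/(|x_h|^4 + 4x_v²)^{1/2} ≥ c + 2n·|x_h|²/G^{1/2}; since |x_h|² ≤ G(x)^{1/2}, this quantity is ≤ c + 2n, so v satisfies the subsolution inequality v_t − tr[…] ≤ 0 at all points with x_h ≠ 0 whenever c ≤ −2n. -/

import Mathlib

open Matrix


noncomputable section HAux
variable {m : ℕ}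

abbrev Epm (m : ℕ) := (Fin m → ℝ) × ℝ

def cL (m : ℕ) (i : Fin m) : Epm m →L[ℝ] ℝ :=
  (ContinuousLinearMap.proj i).comp (ContinuousLinearMap.fst ℝ (Fin m → ℝ) ℝ)

@[simp] lemma cL_apply (i : Fin m) (h : Epm m) : cL m i h = h.1 i := rfl

def sL (m : ℕ) : Epm m →L[ℝ] ℝ := ContinuousLinearMap.snd ℝ (Fin m → ℝ) ℝ

@[simp] lemma sL_apply (h : Epm m) : sL m h = h.2 := rfl

lemma hasFDerivAt_coord (i : Fin m) (x : Epm m) :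
    HasFDerivAt (fun z : Epm m => z.1 i) (cL m i) x := (cL m i).hasFDerivAt

lemma hasFDerivAt_snd' (x : Epm m) :
    HasFDerivAt (fun z : Epm m => z.2) (sL m) x := (sL m).hasFDerivAt

def Drho (z : Epm m) : Epm m →L[ℝ] ℝ := ∑ i, (z.1 i • cL m i + z.1 i • cL m i)

@[simp] lemma Drho_apply (z h : Epm m) : Drho z h = 2 * (z.1 ⬝ᵥ h.1) := by
  simp [Drho, dotProduct, ContinuousLinearMap.sum_apply, two_mul,
    Finset.sum_add_distrib, Finset.mul_sum]

lemma hasFDerivAt_dot (z : Epm m) :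
    HasFDerivAt (fun w : Epm m => w.1 ⬝ᵥ w.1) (Drho z) z := by
  have h : ∀ i ∈ Finset.univ, HasFDerivAt (fun w : Epm m => w.1 i * w.1 i)
      (z.1 i • cL m i + z.1 i • cL m i) z :=
    fun i _ => (hasFDerivAt_coord i z).mul (hasFDerivAt_coord i z)
  simpa [dotProduct, Drho] using HasFDerivAt.fun_sum h

def LB (B : Matrix (Fin m) (Fin m) ℝ) (j : Fin m) : Epm m →L[ℝ] ℝ := ∑ k, B j k • cL m k

@[simp] lemma LB_apply (B : Matrix (Fin m) (Fin m) ℝ) (j : Fin m) (h : Epm m) :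
    LB B j h = ∑ k, B j k * h.1 k := by
  simp [LB, ContinuousLinearMap.sum_apply]

lemma hasFDerivAt_mulVecCoord (B : Matrix (Fin m) (Fin m) ℝ) (j : Fin m) (x : Epm m) :
    HasFDerivAt (fun z : Epm m => (B *ᵥ z.1) j) (LB B j) x := by
  have hfun : (fun z : Epm m => (B *ᵥ z.1) j) = fun z => LB B j z := by
    funext z
    simp [Matrix.mulVec, dotProduct]
  rw [hfun]
  exact (LB B j).hasFDerivAt

def Gf : Epm m → ℝ := fun z => (z.1 ⬝ᵥ z.1) ^ 2 + 4 * z.2 ^ 2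

def DG (z : Epm m) : Epm m →L[ℝ] ℝ := (2 * (z.1 ⬝ᵥ z.1)) • Drho z + (8 * z.2) • sL m

@[simp] lemma DG_apply (z h : Epm m) :
    DG z h = 4 * (z.1 ⬝ᵥ z.1) * (z.1 ⬝ᵥ h.1) + 8 * z.2 * h.2 := by
  simp [DG]; ring

lemma hasFDerivAt_Gf (z : Epm m) : HasFDerivAt (Gf (m := m)) (DG z) z := by
  have h1 : HasFDerivAt (fun w : Epm m => (w.1 ⬝ᵥ w.1) ^ 2)
      ((2 * (z.1 ⬝ᵥ z.1)) • Drho z) z := by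
    have := (hasFDerivAt_dot z).fun_mul (hasFDerivAt_dot z)
    rw [show (2 * (z.1 ⬝ᵥ z.1)) • Drho z
        = (z.1 ⬝ᵥ z.1) • Drho z + (z.1 ⬝ᵥ z.1) • Drho z by rw [two_mul, add_smul]]
    simpa [pow_two] using this
  have h2 : HasFDerivAt (fun w : Epm m => 4 * w.2 ^ 2) ((8 * z.2) • sL m) z := by
    have := ((hasFDerivAt_snd' z).mul (hasFDerivAt_snd' z)).const_mul (4 : ℝ)
    rw [show (8 * z.2) • sL m = (4 : ℝ) • (z.2 • sL m + z.2 • sL m) from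
      ContinuousLinearMap.ext fun h => by simp; ring]
    simpa [pow_two, mul_assoc] using this
  exact h1.add h2

lemma Gf_pos {z : Epm m} (hz : z.1 ≠ 0) : 0 < Gf z := by
  have h1 : 0 < z.1 ⬝ᵥ z.1 := by
    obtain ⟨i, hi⟩ := Function.ne_iff.mp hz
    apply Finset.sum_pos' (fun j _ => mul_self_nonneg _)
    exact ⟨i, Finset.mem_univ i, mul_self_pos.mpr hi⟩
  have : 0 ≤ z.2 ^ 2 := sq_nonneg _
  unfold Gf; nlinarith

lemma sqrtGf_pos {z : Epm m} (hz : z.1 ≠ 0) : 0 < Real.sqrt (Gf z) :=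
  Real.sqrt_pos.mpr (Gf_pos hz)

lemma hasFDerivAt_sqrtGf {z : Epm m} (hz : z.1 ≠ 0) :
    HasFDerivAt (fun w : Epm m => Real.sqrt (Gf w))
      ((1 / (2 * Real.sqrt (Gf z))) • DG z) z :=
  (Real.hasDerivAt_sqrt (Gf_pos hz).ne').comp_hasFDerivAt z (hasFDerivAt_Gf z)

lemma hasFDerivAt_v {z : Epm m} (hz : z.1 ≠ 0) (c t r : ℝ) :
    HasFDerivAt (fun w : Epm m => c * t - Real.sqrt ((w.1 ⬝ᵥ w.1) ^ 2 + 4 * w.2 ^ 2) + r)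
      (-((1 / (2 * Real.sqrt (Gf z))) • DG z)) z := by
  exact ((hasFDerivAt_sqrtGf hz).const_sub (c * t)).add_const r

def Nf (B : Matrix (Fin m) (Fin m) ℝ) (j : Fin m) : Epm m → ℝ :=
  fun z => 2 * (z.1 ⬝ᵥ z.1) * z.1 j + 4 * z.2 * (B *ᵥ z.1) j

def DN (B : Matrix (Fin m) (Fin m) ℝ) (j : Fin m) (z : Epm m) : Epm m →L[ℝ] ℝ :=
  ((2 * (z.1 ⬝ᵥ z.1)) • cL m j + z.1 j • ((2 : ℝ) • Drho z)) +
    ((4 * z.2) • LB B j + (B *ᵥ z.1) j • ((4 : ℝ) • sL m))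

lemma hasFDerivAt_Nf (B : Matrix (Fin m) (Fin m) ℝ) (j : Fin m) (z : Epm m) :
    HasFDerivAt (Nf B j) (DN B j z) z :=
  (((hasFDerivAt_dot z).const_mul (2 : ℝ)).mul (hasFDerivAt_coord j z)).add
    (((hasFDerivAt_snd' z).const_mul (4 : ℝ)).mul (hasFDerivAt_mulVecCoord B j z))

lemma fderiv_v_dir (B : Matrix (Fin m) (Fin m) ℝ) {z : Epm m} (hz : z.1 ≠ 0) (c t r : ℝ)
    (j : Fin m) :
    fderiv ℝ (fun w : Epm m => c * t - Real.sqrt ((w.1 ⬝ᵥ w.1) ^ 2 + 4 * w.2 ^ 2) + r) z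
      (Pi.single j 1, (B *ᵥ z.1) j)
    = -(Nf B j z / Real.sqrt (Gf z)) := by
  rw [(hasFDerivAt_v hz c t r).fderiv]
  have hu : Real.sqrt (Gf z) ≠ 0 := (sqrtGf_pos hz).ne'
  simp [Nf, dotProduct_single]
  field_simp
  ring


lemma fderiv2_dir (B : Matrix (Fin m) (Fin m) ℝ) {x : Epm m} (hx : x.1 ≠ 0) (c t r : ℝ)
    (i j : Fin m) :
    fderiv ℝ (fun z : Epm m =>
        fderiv ℝ (fun w : Epm m => c * t - Real.sqrt ((w.1 ⬝ᵥ w.1) ^ 2 + 4 * w.2 ^ 2) + r) z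
          (Pi.single j 1, (B *ᵥ z.1) j)) x (Pi.single i 1, (B *ᵥ x.1) i)
    = -((4 * x.1 i * x.1 j + 2 * (x.1 ⬝ᵥ x.1) * (if i = j then 1 else 0)
          + 4 * (B *ᵥ x.1) i * (B *ᵥ x.1) j + 4 * x.2 * B j i) / Real.sqrt (Gf x))
      + Nf B i x * Nf B j x / Real.sqrt (Gf x) ^ 3 := by
  have hopen : IsOpen {z : Epm m | z.1 ≠ 0} :=
    isOpen_compl_singleton.preimage continuous_fst
  have hev : (fun z : Epm m =>
      fderiv ℝ (fun w : Epm m => c * t - Real.sqrt ((w.1 ⬝ᵥ w.1) ^ 2 + 4 * w.2 ^ 2) + r) z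
        (Pi.single j 1, (B *ᵥ z.1) j))
      =ᶠ[nhds x] (fun z => -(Nf B j z * (Real.sqrt (Gf z))⁻¹)) := by
    filter_upwards [hopen.mem_nhds hx] with z hz
    rw [fderiv_v_dir B hz c t r j, div_eq_mul_inv]
  rw [hev.fderiv_eq]
  have hu : Real.sqrt (Gf x) ≠ 0 := (sqrtGf_pos hx).ne'
  have hiv : HasFDerivAt (fun z : Epm m => (Real.sqrt (Gf z))⁻¹)
      ((-(Real.sqrt (Gf x) ^ 2)⁻¹) • ((1 / (2 * Real.sqrt (Gf x))) • DG x)) x :=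
    (hasDerivAt_inv hu).comp_hasFDerivAt x (hasFDerivAt_sqrtGf hx)
  have hphi : HasFDerivAt (fun z : Epm m => -(Nf B j z * (Real.sqrt (Gf z))⁻¹))
      (-(Nf B j x • ((-(Real.sqrt (Gf x) ^ 2)⁻¹) • ((1 / (2 * Real.sqrt (Gf x))) • DG x))
          + (Real.sqrt (Gf x))⁻¹ • DN B j x)) x :=
    ((hasFDerivAt_Nf B j x).mul hiv).neg
  rw [hphi.fderiv]
  have hGx : Real.sqrt (Gf x) ^ 2 = Gf x := Real.sq_sqrt (Gf_pos hx).le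
  simp only [ContinuousLinearMap.neg_apply, ContinuousLinearMap.add_apply,
    ContinuousLinearMap.smul_apply, DG_apply, DN, cL_apply, sL_apply, LB_apply,
    Drho_apply, smul_eq_mul, dotProduct_single]
  have hsingle : ∀ k : Fin m, (∑ l, B k l * (Pi.single i 1 : Fin m → ℝ) l) = B k i := by
    intro k
    simp [Pi.single_apply]
  rw [hsingle]
  have hNi : Nf B i x = 2 * (x.1 ⬝ᵥ x.1) * x.1 i + 4 * x.2 * (B *ᵥ x.1) i := rfl
  have hNj : Nf B j x = 2 * (x.1 ⬝ᵥ x.1) * x.1 j + 4 * x.2 * (B *ᵥ x.1) j := rfl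
  have hsj : (Pi.single i 1 : Fin m → ℝ) j = if i = j then 1 else 0 := by
    simp [Pi.single_apply, eq_comm]
  rw [hNi, hNj, hsj]
  rw [mul_one]
  field_simp
  ring


lemma trace_vecMulVec' (a b : Fin m → ℝ) : (vecMulVec a b).trace = a ⬝ᵥ b := by
  simp [Matrix.trace, Matrix.diag, Matrix.vecMulVec_apply, dotProduct]

lemma vecMulVec_mulVec' (a b w : Fin m → ℝ) : vecMulVec a b *ᵥ w = (b ⬝ᵥ w) • a := by
  funext i
  simp only [Matrix.mulVec, dotProduct, Matrix.vecMulVec_apply, Pi.smul_apply,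
    smul_eq_mul]
  rw [Finset.sum_mul]
  exact Finset.sum_congr rfl fun k _ => by ring

lemma dot_self_pos {z : Fin m → ℝ} (hz : z ≠ 0) : 0 < z ⬝ᵥ z := by
  obtain ⟨i, hi⟩ := Function.ne_iff.mp hz
  apply Finset.sum_pos' (fun j _ => mul_self_nonneg _)
  exact ⟨i, Finset.mem_univ i, mul_self_pos.mpr hi⟩


def Vv (B : Matrix (Fin m) (Fin m) ℝ) (c t r : ℝ) (x : Epm m) : Fin m → ℝ := fun j =>
  fderiv ℝ (fun w : Epm m => c * t - Real.sqrt ((w.1 ⬝ᵥ w.1) ^ 2 + 4 * w.2 ^ 2) + r) x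
    (Pi.single j 1, (B *ᵥ x.1) j)

def Mm (B : Matrix (Fin m) (Fin m) ℝ) (c t r : ℝ) (x : Epm m) :
    Matrix (Fin m) (Fin m) ℝ := Matrix.of fun i j =>
  (fderiv ℝ (fun z : Epm m =>
      fderiv ℝ (fun w : Epm m => c * t - Real.sqrt ((w.1 ⬝ᵥ w.1) ^ 2 + 4 * w.2 ^ 2) + r) z
        (Pi.single j 1, (B *ᵥ z.1) j)) x (Pi.single i 1, (B *ᵥ x.1) i) +
    fderiv ℝ (fun z : Epm m =>
      fderiv ℝ (fun w : Epm m => c * t - Real.sqrt ((w.1 ⬝ᵥ w.1) ^ 2 + 4 * w.2 ^ 2) + r) z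
        (Pi.single i 1, (B *ᵥ z.1) i)) x (Pi.single j 1, (B *ᵥ x.1) j)) / 2

lemma trace_formula (B : Matrix (Fin m) (Fin m) ℝ) (hB : Bᵀ = -B) (hBo : B * B = -1)
    {x : Epm m} (hx : x.1 ≠ 0) (c t r : ℝ) :
    c - (Mm B c t r x -
        (Vv B c t r x ⬝ᵥ Vv B c t r x)⁻¹ •
          vecMulVec (Mm B c t r x *ᵥ Vv B c t r x) (Vv B c t r x)).trace
      = c + 2 * (m + 1) * (x.1 ⬝ᵥ x.1) / Real.sqrt (Gf x) := by
  have hG : 0 < Gf x := Gf_pos hx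
  have hupos : 0 < Real.sqrt (Gf x) := sqrtGf_pos hx
  set u := Real.sqrt (Gf x) with hu_def
  have hu : u ≠ 0 := hupos.ne'
  have hu2 : u ^ 2 = Gf x := Real.sq_sqrt hG.le
  have hρ : 0 < x.1 ⬝ᵥ x.1 := dot_self_pos hx
  set ρ := x.1 ⬝ᵥ x.1 with hρ_def
  -- basic dot products
  have hvm : x.1 ᵥ* B = -(B *ᵥ x.1) := by
    rw [← Matrix.mulVec_transpose, hB, Matrix.neg_mulVec]
  have dxn : x.1 ⬝ᵥ (B *ᵥ x.1) = 0 := by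
    have h := Matrix.dotProduct_mulVec x.1 B x.1
    rw [hvm, neg_dotProduct, dotProduct_comm (B *ᵥ x.1) x.1] at h
    linarith
  have dnx : (B *ᵥ x.1) ⬝ᵥ x.1 = 0 := by rw [dotProduct_comm]; exact dxn
  have dnn : (B *ᵥ x.1) ⬝ᵥ (B *ᵥ x.1) = ρ := by
    rw [Matrix.dotProduct_mulVec, ← Matrix.mulVec_transpose, Matrix.mulVec_mulVec, hB,
      Matrix.neg_mul, hBo, neg_neg, Matrix.one_mulVec]
  have e1 : (∑ k, x.1 k * x.1 k) = ρ := rfl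
  have e2 : (∑ k, (B *ᵥ x.1) k * x.1 k) = 0 := dnx
  have e2' : (∑ k, x.1 k * (B *ᵥ x.1) k) = 0 := dxn
  have e3 : (∑ k, (B *ᵥ x.1) k * (B *ᵥ x.1) k) = ρ := dnn
  -- sums with Nf
  have hNk : ∀ k, Nf B k x = 2 * ρ * x.1 k + 4 * x.2 * (B *ᵥ x.1) k := fun k => rfl
  have SNx : ∑ k, Nf B k x * x.1 k = 2 * ρ * ρ := by
    have h : ∀ k ∈ Finset.univ, Nf B k x * x.1 k
        = 2 * ρ * (x.1 k * x.1 k) + 4 * x.2 * ((B *ᵥ x.1) k * x.1 k) := fun k _ => by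
      rw [hNk k]; ring
    rw [Finset.sum_congr rfl h, Finset.sum_add_distrib, ← Finset.mul_sum, ← Finset.mul_sum,
      e1, e2]
    ring
  have SNn : ∑ k, Nf B k x * (B *ᵥ x.1) k = 4 * x.2 * ρ := by
    have h : ∀ k ∈ Finset.univ, Nf B k x * (B *ᵥ x.1) k
        = 2 * ρ * (x.1 k * (B *ᵥ x.1) k)
          + 4 * x.2 * ((B *ᵥ x.1) k * (B *ᵥ x.1) k) := fun k _ => by
      rw [hNk k]; ring
    rw [Finset.sum_congr rfl h, Finset.sum_add_distrib, ← Finset.mul_sum, ← Finset.mul_sum,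
      e2', e3]
    ring
  have SNN : ∑ k, Nf B k x * Nf B k x = 4 * ρ * u ^ 2 := by
    have h : ∀ k ∈ Finset.univ, Nf B k x * Nf B k x
        = 2 * ρ * (2 * ρ * (x.1 k * x.1 k))
          + 2 * ρ * (4 * x.2 * (x.1 k * (B *ᵥ x.1) k))
          + 4 * x.2 * (2 * ρ * ((B *ᵥ x.1) k * x.1 k))
          + 4 * x.2 * (4 * x.2 * ((B *ᵥ x.1) k * (B *ᵥ x.1) k)) := fun k _ => by
      rw [hNk k]; ring
    rw [Finset.sum_congr rfl h, Finset.sum_add_distrib, Finset.sum_add_distrib,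
      Finset.sum_add_distrib, ← Finset.mul_sum, ← Finset.mul_sum, ← Finset.mul_sum,
      ← Finset.mul_sum, ← Finset.mul_sum, ← Finset.mul_sum, ← Finset.mul_sum,
      ← Finset.mul_sum, e1, e2, e2', e3, hu2]
    unfold Gf
    push_cast
    ring
  -- the gradient vector
  have hV : Vv B c t r x = fun j => -(Nf B j x / u) := by
    funext j
    exact fderiv_v_dir B hx c t r j
  -- dot products with V
  have dVV : Vv B c t r x ⬝ᵥ Vv B c t r x = 4 * ρ := by
    rw [hV]
    have h : ∀ k ∈ Finset.univ, -(Nf B k x / u) * -(Nf B k x / u)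
        = (u^2)⁻¹ * (Nf B k x * Nf B k x) := fun k _ => by ring
    show (∑ k, -(Nf B k x / u) * -(Nf B k x / u)) = 4 * ρ
    rw [Finset.sum_congr rfl h, ← Finset.mul_sum, SNN]
    field_simp
  have dxV : x.1 ⬝ᵥ Vv B c t r x = -(2 * ρ * ρ) / u := by
    rw [hV]
    have h : ∀ k ∈ Finset.univ, x.1 k * -(Nf B k x / u)
        = -u⁻¹ * (Nf B k x * x.1 k) := fun k _ => by ring
    show (∑ k, x.1 k * -(Nf B k x / u)) = -(2 * ρ * ρ) / u
    rw [Finset.sum_congr rfl h, ← Finset.mul_sum, SNx]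
    field_simp
  have dnV : (B *ᵥ x.1) ⬝ᵥ Vv B c t r x = -(4 * x.2 * ρ) / u := by
    rw [hV]
    have h : ∀ k ∈ Finset.univ, (B *ᵥ x.1) k * -(Nf B k x / u)
        = -u⁻¹ * (Nf B k x * (B *ᵥ x.1) k) := fun k _ => by ring
    show (∑ k, (B *ᵥ x.1) k * -(Nf B k x / u)) = -(4 * x.2 * ρ) / u
    rw [Finset.sum_congr rfl h, ← Finset.mul_sum, SNn]
    field_simp
  have dNV : (fun k => Nf B k x) ⬝ᵥ Vv B c t r x = -(4 * ρ * u) := by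
    rw [hV]
    have h : ∀ k ∈ Finset.univ, Nf B k x * -(Nf B k x / u)
        = -u⁻¹ * (Nf B k x * Nf B k x) := fun k _ => by ring
    show (∑ k, Nf B k x * -(Nf B k x / u)) = -(4 * ρ * u)
    rw [Finset.sum_congr rfl h, ← Finset.mul_sum, SNN]
    field_simp
  have dNN : (fun k => Nf B k x) ⬝ᵥ (fun k => Nf B k x) = 4 * ρ * u ^ 2 := SNN
  have dxx : x.1 ⬝ᵥ x.1 = ρ := rfl
  -- the Hessian matrix
  have hBskew : ∀ i j, B j i = -B i j := fun i j => by
    have := congrFun (congrFun hB i) j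
    simpa [Matrix.transpose_apply] using this
  have hM : Mm B c t r x
      = (-(4/u)) • vecMulVec x.1 x.1 + (-(2*ρ/u)) • (1 : Matrix (Fin m) (Fin m) ℝ)
        + (-(4/u)) • vecMulVec (B *ᵥ x.1) (B *ᵥ x.1)
        + (u^3)⁻¹ • vecMulVec (fun k => Nf B k x) (fun k => Nf B k x) := by
    ext i j
    simp only [Mm, Matrix.of_apply, Matrix.add_apply, Matrix.smul_apply, Matrix.one_apply,
      Matrix.vecMulVec_apply, smul_eq_mul]
    rw [fderiv2_dir B hx c t r i j, fderiv2_dir B hx c t r j i, hBskew i j]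
    rcases eq_or_ne i j with rfl | hij
    · simp only [if_pos rfl]
      field_simp
      ring
    · simp only [if_neg hij, if_neg (Ne.symm hij)]
      field_simp
      ring
  -- mulVec
  have hMv : Mm B c t r x *ᵥ Vv B c t r x
      = (8 * ρ^2 / u^2) • x.1 + (-(2*ρ/u)) • Vv B c t r x
        + (16 * x.2 * ρ / u^2) • (B *ᵥ x.1) + (-(4*ρ/u^2)) • (fun k => Nf B k x) := by
    rw [hM]
    rw [Matrix.add_mulVec, Matrix.add_mulVec, Matrix.add_mulVec, Matrix.smul_mulVec,
      Matrix.smul_mulVec, Matrix.smul_mulVec, Matrix.smul_mulVec,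
      vecMulVec_mulVec', vecMulVec_mulVec', vecMulVec_mulVec', Matrix.one_mulVec,
      dxV, dnV, dNV]
    match_scalars <;> field_simp <;> ring
  -- assemble the trace
  rw [Matrix.trace_sub, Matrix.trace_smul, hMv]
  rw [show (vecMulVec ((8 * ρ^2 / u^2) • x.1 + (-(2*ρ/u)) • Vv B c t r x
        + (16 * x.2 * ρ / u^2) • (B *ᵥ x.1) + (-(4*ρ/u^2)) • (fun k => Nf B k x))
        (Vv B c t r x)).trace
      = ((8 * ρ^2 / u^2) • x.1 + (-(2*ρ/u)) • Vv B c t r x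
        + (16 * x.2 * ρ / u^2) • (B *ᵥ x.1) + (-(4*ρ/u^2)) • (fun k => Nf B k x))
          ⬝ᵥ Vv B c t r x from trace_vecMulVec' _ _]
  rw [add_dotProduct, add_dotProduct, add_dotProduct,
    smul_dotProduct, smul_dotProduct, smul_dotProduct,
    smul_dotProduct, dxV, dnV, dNV, dVV]
  rw [hM, Matrix.trace_add, Matrix.trace_add, Matrix.trace_add, Matrix.trace_smul,
    Matrix.trace_smul, Matrix.trace_smul, Matrix.trace_smul, Matrix.trace_one,
    trace_vecMulVec', trace_vecMulVec', trace_vecMulVec', dxx, dnn, dNN]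
  simp only [smul_eq_mul, Fintype.card_fin]
  have hu2' : u ^ 2 = ρ ^ 2 + 4 * x.2 ^ 2 := hu2
  field_simp
  linear_combination (16 * ρ) * hu2'


lemma ineq_formula {x : Epm m} (hx : x.1 ≠ 0) (c : ℝ) :
    c + 2 * (m + 1) * (x.1 ⬝ᵥ x.1) / Real.sqrt (Gf x) ≤ c + 2 * (m + 1) := by
  have hρ : 0 < x.1 ⬝ᵥ x.1 := dot_self_pos hx
  have hu : 0 < Real.sqrt (Gf x) := sqrtGf_pos hx
  have hle : x.1 ⬝ᵥ x.1 ≤ Real.sqrt (Gf x) := by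
    have h1 : x.1 ⬝ᵥ x.1 = Real.sqrt ((x.1 ⬝ᵥ x.1) ^ 2) := (Real.sqrt_sq hρ.le).symm
    rw [h1]
    exact Real.sqrt_le_sqrt (by unfold Gf; nlinarith [sq_nonneg x.2])
  have hA : (0:ℝ) ≤ 2 * ((m : ℝ) + 1) := by positivity
  have h2 : 2 * ((m : ℝ) + 1) * (x.1 ⬝ᵥ x.1) / Real.sqrt (Gf x) ≤ 2 * ((m : ℝ) + 1) := by
    rw [div_le_iff₀ hu]
    nlinarith
  linarith

end HAux

/-- For `v(x,t) = ct − (|x_h|⁴ + 4x_v²)^{1/2} + r` on a Heisenberg-type step-two Carnot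
group (`B` skew-symmetric with `B² = −I`, `n = m + 1`), at points with `x_h ≠ 0`:
`v_t − tr[X²v − (X²v Xv ⊗ Xv)/|Xv|²] = c + 2n|x_h|²/√G(x)`, this quantity is
`≤ c + 2n` since `|x_h|² ≤ √G(x)`, and hence the subsolution inequality
`v_t − tr[…] ≤ 0` holds at all such points whenever `c ≤ −2n`.
Horizontal derivatives are taken along the generators `X_j = ∂_{x_j} + (B x_h)_j ∂_v`. -/
theorem gauge_sqrt_global_subsolution_of_horizontal_mcf
    (m : ℕ) (hm : 2 ≤ m) (B : Matrix (Fin m) (Fin m) ℝ)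
    (hB : Bᵀ = -B) (hBo : B * B = -1) (c r t : ℝ) :
    letI E := (Fin m → ℝ) × ℝ
    letI dir : E → Fin m → E := fun y j => (Pi.single j 1, (B *ᵥ y.1) j)
    letI G : E → ℝ := fun x => (x.1 ⬝ᵥ x.1) ^ 2 + 4 * x.2 ^ 2
    letI v : E → ℝ := fun x => c * t - Real.sqrt (G x) + r
    letI Xv : E → Fin m → ℝ := fun x j => fderiv ℝ v x (dir x j)
    letI X2v : E → Matrix (Fin m) (Fin m) ℝ := fun x => Matrix.of fun i j =>
      (fderiv ℝ (fun z => fderiv ℝ v z (dir z j)) x (dir x i) +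
        fderiv ℝ (fun z => fderiv ℝ v z (dir z i)) x (dir x j)) / 2
    ∀ x : E, x.1 ≠ 0 →
      (c - (X2v x - (Xv x ⬝ᵥ Xv x)⁻¹ • vecMulVec (X2v x *ᵥ Xv x) (Xv x)).trace
          = c + 2 * (m + 1) * (x.1 ⬝ᵥ x.1) / Real.sqrt (G x)) ∧
      (c + 2 * (m + 1) * (x.1 ⬝ᵥ x.1) / Real.sqrt (G x) ≤ c + 2 * (m + 1)) ∧
      (c ≤ -(2 * (m + 1)) →
        c - (X2v x - (Xv x ⬝ᵥ Xv x)⁻¹ • vecMulVec (X2v x *ᵥ Xv x) (Xv x)).trace ≤ 0) := by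
  
  intro x hx
  have key := trace_formula B hB hBo hx c t r
  have h2 := ineq_formula hx c
  exact ⟨key, h2, fun hc => le_of_eq_of_le key (by linarith)⟩
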